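/- Let P be a Markov operator on bounded measurable functions (i.e., P is linear, positivity-preserving, and P1 = 1), and let p > 1. Suppose for some states z̃, z and constant Γ ≥ 1 the Harnack inequality (P f(z̃))^p ≤ Γ · P f^p(z) holds for all bounded nonnegative measurable f, and suppose the transition kernels P(z̃,·), P(z,·) exist. Then P(z̃,·) is absolutely continuous with respect to P(z,·), and the density π = dP(z̃,·)/dP(z,·) satisfies ∫ π^{1/(p-1)} dP(z̃,·) = ∫ π^{p/(p-1)} dP(z,·) ≤ Γ^{1/(p-1)}. -/

import Mathlib

open MeasureTheory

private lemma aux_rpow_add_one {a q : ℝ} (ha : 0 ≤ a) (hq : 0 < q) :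
    a ^ (q + 1) = a ^ q * a := by
  rcases eq_or_lt_of_le ha with h | h
  · simp [← h, Real.zero_rpow (by positivity : q + 1 ≠ 0), Real.zero_rpow hq.ne']
  · rw [Real.rpow_add h, Real.rpow_one]

theorem harnack_implies_density_bound {S : Type*} [MeasurableSpace S]
    (μ ν : Measure S) [IsProbabilityMeasure μ] [IsProbabilityMeasure ν]
    (p Γ : ℝ) (hp : 1 < p) (hΓ : 1 ≤ Γ)
    (harnack : ∀ f : S → ℝ, Measurable f → (∀ x, 0 ≤ f x) → (∃ C, ∀ x, f x ≤ C) →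
      (∫ x, f x ∂μ) ^ p ≤ Γ * ∫ x, (f x) ^ p ∂ν) :
    μ ≪ ν ∧
    (∫ x, ((μ.rnDeriv ν x).toReal) ^ (1 / (p - 1)) ∂μ) =
      ∫ x, ((μ.rnDeriv ν x).toReal) ^ (p / (p - 1)) ∂ν ∧
    (∫ x, ((μ.rnDeriv ν x).toReal) ^ (p / (p - 1)) ∂ν) ≤ Γ ^ (1 / (p - 1)) := by
  have hp1 : (0:ℝ) < p - 1 := by linarith
  have hp0 : (0:ℝ) < p := by linarith
  set q : ℝ := 1 / (p - 1) with hq_def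
  have hq : 0 < q := by positivity
  have hpq : p / (p - 1) = q + 1 := by rw [hq_def]; field_simp; ring
  have hqp : q * p = q + 1 := by rw [hq_def]; field_simp; ring
  have hΓq : (1:ℝ) ≤ Γ ^ q := by
    calc (1:ℝ) = 1 ^ q := (Real.one_rpow q).symm
    _ ≤ Γ ^ q := Real.rpow_le_rpow zero_le_one hΓ hq.le
  -- absolute continuity
  have hac : μ ≪ ν := by
    refine Measure.AbsolutelyContinuous.mk fun A hA hA0 => ?_
    have h := harnack (A.indicator 1) (measurable_one.indicator hA)
      (fun x => Set.indicator_nonneg (fun _ _ => zero_le_one) x)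
      ⟨1, fun x => Set.indicator_le_self' (fun _ _ => zero_le_one) x⟩
    have h1 : ∀ x, (A.indicator (1 : S → ℝ) x) ^ p = A.indicator 1 x := by
      intro x
      by_cases hx : x ∈ A <;> simp [hx, Real.zero_rpow hp0.ne']
    simp_rw [h1] at h
    rw [integral_indicator_one hA, integral_indicator_one hA] at h
    rw [measureReal_def, measureReal_def, hA0] at h
    simp only [ENNReal.toReal_zero, mul_zero] at h
    have hμA : (μ A).toReal = 0 := by
      by_contra hne
      have hpos : 0 < (μ A).toReal := lt_of_le_of_ne ENNReal.toReal_nonneg (Ne.symm hne)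
      exact absurd h (not_le.mpr (Real.rpow_pos_of_pos hpos p))
    exact (ENNReal.toReal_eq_zero_iff _).mp hμA |>.resolve_right (measure_ne_top μ A)
  set πr : S → ℝ := fun x => (μ.rnDeriv ν x).toReal with hπr_def
  have hπr_meas : Measurable πr := (Measure.measurable_rnDeriv μ ν).ennreal_toReal
  have hπr_nonneg : ∀ x, 0 ≤ πr x := fun x => ENNReal.toReal_nonneg
  have hrpow_meas : ∀ r : ℝ, 0 ≤ r → Measurable fun x : ℝ => x ^ r :=
    fun r hr => (Real.continuous_rpow_const hr).measurable
  -- truncated functions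
  set g : ℕ → S → ℝ := fun n x => min (πr x) n ^ q with hg_def
  have hmin_meas : ∀ n : ℕ, Measurable fun x => min (πr x) (n:ℝ) :=
    fun n => hπr_meas.min measurable_const
  have hg_meas : ∀ n, Measurable (g n) :=
    fun n => (hrpow_meas q hq.le).comp (hmin_meas n)
  have hmin_nonneg : ∀ (n : ℕ) x, 0 ≤ min (πr x) n :=
    fun n x => le_min (hπr_nonneg x) (Nat.cast_nonneg n)
  have hg_nonneg : ∀ n x, 0 ≤ g n x :=
    fun n x => Real.rpow_nonneg (hmin_nonneg n x) q
  have hg_bdd : ∀ n : ℕ, ∀ x, g n x ≤ (n:ℝ) ^ q := fun n x =>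
    Real.rpow_le_rpow (hmin_nonneg n x) (min_le_right _ _) hq.le
  -- pointwise: g n x ^ p = min ^ (q+1)
  have hgp : ∀ n x, g n x ^ p = min (πr x) n ^ (q + 1) := by
    intro n x
    rw [hg_def, ← Real.rpow_mul (hmin_nonneg n x), hqp]
  -- A_n is the clean integral
  set A : ℕ → ℝ := fun n => ∫ x, min (πr x) n ^ (q + 1) ∂ν with hA_def
  have hint_minpow : ∀ n : ℕ, Integrable (fun x => min (πr x) n ^ (q + 1)) ν := by
    intro n
    apply Integrable.mono' (integrable_const ((n:ℝ) ^ (q + 1)))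
      (((hrpow_meas (q+1) (by positivity)).comp (hmin_meas n)).aestronglyMeasurable)
    filter_upwards with x
    simp only [Function.comp_apply]
    rw [Real.norm_of_nonneg (Real.rpow_nonneg (hmin_nonneg n x) _)]
    exact Real.rpow_le_rpow (hmin_nonneg n x) (min_le_right _ _) (by positivity)
  have hA_nonneg : ∀ n, 0 ≤ A n := fun n =>
    integral_nonneg fun x => Real.rpow_nonneg (hmin_nonneg n x) _
  -- Harnack applied to g n gives (∫ g n dμ)^p ≤ Γ * A n
  have hB : ∀ n : ℕ, A n ≤ ∫ x, g n x ∂μ := by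
    intro n
    rw [← integral_rnDeriv_smul hac (f := g n)]
    have hint2' : Integrable (fun x => g n x * (μ.rnDeriv ν x).toReal) ν := by
      apply (Measure.integrable_toReal_rnDeriv (μ := μ) (ν := ν)).bdd_mul
        (hg_meas n).aestronglyMeasurable (c := (n:ℝ) ^ q)
      filter_upwards with x
      rw [Real.norm_of_nonneg (hg_nonneg n x)]
      exact hg_bdd n x
    have hint2 : Integrable (fun x => (μ.rnDeriv ν x).toReal • g n x) ν :=
      hint2'.congr (by filter_upwards with x; rw [smul_eq_mul, mul_comm])
    refine integral_mono (hint_minpow n) hint2 fun x => ?_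
    show min (πr x) n ^ (q + 1) ≤ (μ.rnDeriv ν x).toReal • g n x
    rw [aux_rpow_add_one (hmin_nonneg n x) hq, smul_eq_mul, mul_comm]
    exact mul_le_mul_of_nonneg_right (min_le_left _ _) (hg_nonneg n x)
  have hAn_le : ∀ n : ℕ, A n ≤ Γ ^ q := by
    intro n
    have h := harnack (g n) (hg_meas n) (hg_nonneg n) ⟨(n:ℝ) ^ q, hg_bdd n⟩
    simp_rw [hgp n] at h
    have hmono : A n ^ p ≤ Γ * A n :=
      le_trans (Real.rpow_le_rpow (hA_nonneg n) (hB n) hp0.le) h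
    rcases le_or_gt (A n) 1 with h1 | h1
    · exact h1.trans hΓq
    · have hApos : 0 < A n := lt_trans zero_lt_one h1
      have hkey : A n ^ (p - 1) ≤ Γ := by
        have : A n ^ (p - 1) * A n ≤ Γ * A n := by
          rw [← Real.rpow_add_one hApos.ne' (p-1)]
          simpa using hmono
        exact le_of_mul_le_mul_right this hApos
      calc A n = (A n ^ (p - 1)) ^ q := by
            rw [← Real.rpow_mul (hA_nonneg n), hq_def]
            field_simp
            rw [Real.rpow_one]
          _ ≤ Γ ^ q := Real.rpow_le_rpow (Real.rpow_nonneg (hA_nonneg n) _) hkey hq.le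
  -- lintegral version and monotone convergence
  set G : ℕ → S → ENNReal := fun n x => ENNReal.ofReal (min (πr x) n ^ (q + 1)) with hG_def
  have hG_meas : ∀ n, Measurable (G n) := fun n =>
    ((hrpow_meas (q+1) (by positivity)).comp (hmin_meas n)).ennreal_ofReal
  have hG_mono : Monotone G := by
    intro m n hmn x
    apply ENNReal.ofReal_le_ofReal
    exact Real.rpow_le_rpow (hmin_nonneg m x)
      (min_le_min le_rfl (Nat.cast_le.mpr hmn)) (by positivity)
  have hG_sup : ∀ x, (⨆ n, G n x) = ENNReal.ofReal (πr x ^ (q + 1)) := by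
    intro x
    apply le_antisymm
    · apply iSup_le; intro n
      exact ENNReal.ofReal_le_ofReal
        (Real.rpow_le_rpow (hmin_nonneg n x) (min_le_left _ _) (by positivity))
    · have := le_iSup G ⌈πr x⌉₊
      rw [hG_def] at this ⊢
      simpa [min_eq_left (Nat.le_ceil (πr x))] using this x
  have hL : ∫⁻ x, ENNReal.ofReal (πr x ^ (q + 1)) ∂ν ≤ ENNReal.ofReal (Γ ^ q) := by
    have : ∫⁻ x, ⨆ n, G n x ∂ν = ⨆ n, ∫⁻ x, G n x ∂ν := lintegral_iSup hG_meas hG_mono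
    simp_rw [hG_sup] at this
    rw [this]
    apply iSup_le
    intro n
    rw [hG_def]
    rw [← ofReal_integral_eq_lintegral_ofReal (hint_minpow n)
      (Filter.Eventually.of_forall fun x => Real.rpow_nonneg (hmin_nonneg n x) _)]
    exact ENNReal.ofReal_le_ofReal (hAn_le n)
  -- integrability of the limit
  have hπpow_meas : Measurable fun x => πr x ^ (q + 1) :=
    (hrpow_meas (q+1) (by positivity)).comp hπr_meas
  have hint_lim : Integrable (fun x => πr x ^ (q + 1)) ν := by
    refine ⟨hπpow_meas.aestronglyMeasurable, ?_⟩
    rw [hasFiniteIntegral_iff_ofReal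
      (Filter.Eventually.of_forall fun x => Real.rpow_nonneg (hπr_nonneg x) _)]
    exact lt_of_le_of_lt hL ENNReal.ofReal_lt_top
  refine ⟨hac, ?_, ?_⟩
  · -- equality of the two integrals
    have := integral_rnDeriv_smul hac (f := fun x => πr x ^ q)
    rw [← this]
    apply integral_congr_ae
    filter_upwards with x
    rw [smul_eq_mul, hpq, aux_rpow_add_one (hπr_nonneg x) hq, mul_comm]
  · -- the bound
    rw [hpq]
    rw [integral_eq_lintegral_of_nonneg_ae
      (Filter.Eventually.of_forall fun x => Real.rpow_nonneg (hπr_nonneg x) _)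
      hπpow_meas.aestronglyMeasurable]
    rw [hq_def] at hL ⊢
    exact ENNReal.toReal_le_of_le_ofReal (le_trans zero_le_one hΓq) hL
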